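/- Let t be a target distribution with countably infinite support. Then for each positive integer M there exists an M-type distribution p^(M) minimizing ‖p − t‖₁ over all M-type distributions such that the support sizes k(M) of p^(M) satisfy k(M) → ∞ and k(M)/M → 0 as M → ∞. -/

import Mathlib

/-- Variational distance `‖p − t‖₁ = Σ_i |p_i − t_i|`. -/
noncomputable def vd (p t : ℕ → ℝ) : ℝ := ∑' i, |p i - t i|

/-- A target distribution: a probability distribution on the positive integers
(indexed here by ℕ) with nonincreasing entries. -/
def IsTargetDist (t : ℕ → ℝ) : Prop :=
  (∀ i, 0 ≤ t i) ∧ (∀ i, t (i + 1) ≤ t i) ∧ HasSum t 1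

/-- An `M`-type distribution: every entry is `c_i / M` for a nonnegative integer
`c_i ≤ M`, and the entries sum to one. -/
def IsMType (M : ℕ) (p : ℕ → ℝ) : Prop :=
  HasSum p 1 ∧ ∃ c : ℕ → ℕ, (∀ i, c i ≤ M) ∧ ∀ i, p i = (c i : ℝ) / M

open Filter Finset

namespace Stmt8Aux

/-- tail sum -/
noncomputable def T (t : ℕ → ℝ) (n : ℕ) : ℝ := ∑' i, t (i + n)

/-- objective functional: `vd q t = 2 - 2 * F t q` -/
noncomputable def F (t q : ℕ → ℝ) : ℝ := ∑' i, min (q i) (t i)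

lemma fin_le_strictMono {k : ℕ} {f : Fin k → ℕ} (hf : StrictMono f) :
    ∀ v (hv : v < k), v ≤ f ⟨v, hv⟩ := by
  intro v
  induction v with
  | zero => intro _; exact Nat.zero_le _
  | succ n ih =>
    intro hv
    have h1 : n < k := Nat.lt_of_succ_lt hv
    have h2 := ih h1
    have h3 : f ⟨n, h1⟩ < f ⟨n + 1, hv⟩ := hf (by simp [Fin.lt_def])
    omega

variable {t q : ℕ → ℝ} {M : ℕ}

lemma mtype_nonneg (hq : IsMType M q) (i : ℕ) : 0 ≤ q i := by
  obtain ⟨c, _, hc⟩ := hq.2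
  rw [hc]; positivity

lemma mtype_ge (hM : 0 < M) (hq : IsMType M q) {i : ℕ} (hi : q i ≠ 0) : 1 / M ≤ q i := by
  obtain ⟨c, _, hc⟩ := hq.2
  rw [hc] at hi ⊢
  have hci : c i ≠ 0 := by
    intro h; rw [h] at hi; simp at hi
  have h1 : (1 : ℝ) ≤ c i := by exact_mod_cast Nat.one_le_iff_ne_zero.2 hci
  have hMR : (0:ℝ) < M := by exact_mod_cast hM
  gcongr

lemma mtype_support (hM : 0 < M) (hq : IsMType M q) :
    ∃ S : Finset ℕ, (∀ i, i ∈ S ↔ q i ≠ 0) ∧ S.card ≤ M ∧ ∑ i ∈ S, q i = 1 := by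
  have hMR : (0:ℝ) < M := by exact_mod_cast hM
  have hfin : {i | q i ≠ 0}.Finite := by
    have h1 : ∀ᶠ i in cofinite, q i < 1 / M :=
      hq.1.summable.tendsto_cofinite_zero.eventually (gt_mem_nhds (by positivity))
    have h2 : {i | ¬ q i < 1 / M}.Finite := Filter.eventually_cofinite.mp h1
    exact h2.subset (fun i hi => not_lt.2 (mtype_ge hM hq hi))
  refine ⟨hfin.toFinset, fun i => by simp, ?_, ?_⟩
  · -- card bound
    have hsum : ∑ i ∈ hfin.toFinset, q i = 1 := by
      rw [← hq.1.tsum_eq]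
      exact (tsum_eq_sum (fun i hi => by simpa using (by simpa using hi : ¬ q i ≠ 0))).symm
    have hlow : (hfin.toFinset.card : ℝ) * (1 / M) ≤ ∑ i ∈ hfin.toFinset, q i := by
      calc (hfin.toFinset.card : ℝ) * (1 / M) = ∑ _i ∈ hfin.toFinset, (1:ℝ)/M := by
            rw [Finset.sum_const, nsmul_eq_mul]
        _ ≤ _ := Finset.sum_le_sum (fun i hi => mtype_ge hM hq (by simpa using hi))
    rw [hsum] at hlow
    have : (hfin.toFinset.card : ℝ) ≤ M := by
      rw [mul_one_div, div_le_one hMR] at hlow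
      exact hlow
    exact_mod_cast this
  · rw [← hq.1.tsum_eq]
    exact (tsum_eq_sum (fun i hi => by simpa using (by simpa using hi : ¬ q i ≠ 0))).symm

lemma summable_min (ht : IsTargetDist t) (hq0 : ∀ i, 0 ≤ q i) :
    Summable fun i => min (q i) (t i) :=
  Summable.of_nonneg_of_le (fun i => le_min (hq0 i) (ht.1 i))
    (fun i => min_le_right _ _) ht.2.2.summable

lemma F_nonneg (ht : IsTargetDist t) (hq0 : ∀ i, 0 ≤ q i) : 0 ≤ F t q :=
  tsum_nonneg (fun i => le_min (hq0 i) (ht.1 i))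

lemma vd_eq (ht : IsTargetDist t) (hq : IsMType M q) : vd q t = 2 - 2 * F t q := by
  have habs : ∀ i, |q i - t i| = (q i + t i) - 2 * min (q i) (t i) := by
    intro i
    rcases le_total (q i) (t i) with h | h
    · rw [abs_of_nonpos (by linarith), min_eq_left h]; ring
    · rw [abs_of_nonneg (by linarith), min_eq_right h]; ring
  have h1 : Summable (fun i => q i + t i) := hq.1.summable.add ht.2.2.summable
  have h2 : Summable (fun i => 2 * min (q i) (t i)) :=
    (summable_min ht (mtype_nonneg hq)).mul_left 2
  calc vd q t = ∑' i, ((q i + t i) - 2 * min (q i) (t i)) := by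
        unfold vd; exact tsum_congr habs
    _ = (∑' i, (q i + t i)) - ∑' i, 2 * min (q i) (t i) := Summable.tsum_sub h1 h2
    _ = ((∑' i, q i) + ∑' i, t i) - 2 * ∑' i, min (q i) (t i) := by
        rw [Summable.tsum_add hq.1.summable ht.2.2.summable, tsum_mul_left]
    _ = 2 - 2 * F t q := by rw [hq.1.tsum_eq, ht.2.2.tsum_eq, F]; ring

lemma vd_le_vd (ht : IsTargetDist t) {p : ℕ → ℝ} (hp : IsMType M p) (hq : IsMType M q)
    (h : F t q ≤ F t p) : vd p t ≤ vd q t := by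
  rw [vd_eq ht hp, vd_eq ht hq]; linarith

section Tfacts
variable (ht : IsTargetDist t)
include ht

lemma T_eq (n : ℕ) : T t n = 1 - ∑ i ∈ range n, t i := by
  have := Summable.sum_add_tsum_nat_add (f := t) n ht.2.2.summable
  rw [ht.2.2.tsum_eq] at this
  unfold T; linarith

lemma T_summable (n : ℕ) : Summable fun i => t (i + n) :=
  (summable_nat_add_iff n).2 ht.2.2.summable

lemma t_le_T (n : ℕ) (hpos : ∀ i, 0 ≤ t i) : t n ≤ T t n := by
  have := Summable.le_tsum (T_summable ht n) 0 (fun j _ => hpos (j + n))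
  simpa [T] using this

lemma T_succ (n : ℕ) : T t n = t n + T t (n + 1) := by
  have h1 : T t n = t n + ∑' i, t (i + 1 + n) := by
    have := Summable.tsum_eq_zero_add (T_summable ht n)
    simpa [T] using this
  rw [h1]
  congr 1
  apply tsum_congr
  intro i
  congr 1
  omega

lemma T_anti : Antitone (T t) := by
  apply antitone_nat_of_succ_le
  intro n
  rw [T_succ ht n]
  nlinarith [ht.1 n]

lemma lt_of_T_lt {k N : ℕ} (h : T t k < T t N) : N < k := by
  by_contra hc
  exact absurd (T_anti ht (not_lt.1 hc)) (not_le.2 h)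

lemma T_tendsto : Tendsto (T t) atTop (nhds 0) := by
  have h1 : Tendsto (fun n => ∑ i ∈ range n, t i) atTop (nhds 1) := ht.2.2.tendsto_sum_nat
  have h2 : Tendsto (fun n => 1 - ∑ i ∈ range n, t i) atTop (nhds (1 - 1)) :=
    tendsto_const_nhds.sub h1
  simp only [sub_self] at h2
  exact h2.congr (fun n => (T_eq ht n).symm)

lemma T_pos (hpos : ∀ i, 0 < t i) (n : ℕ) : 0 < T t n :=
  lt_of_lt_of_le (hpos n) (t_le_T ht n (fun i => (hpos i).le))

lemma t_partial_le (n : ℕ) : ∑ i ∈ range n, t i ≤ 1 := by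
  have := T_eq ht n
  have h2 : 0 ≤ T t n := tsum_nonneg (fun i => ht.1 _)
  linarith

end Tfacts

section Cand
variable (M : ℕ)

def cExt (c : Fin M → Fin (M + 1)) : ℕ → ℕ := fun i => if h : i < M then c ⟨i, h⟩ else 0

noncomputable def qOf (c : Fin M → Fin (M + 1)) : ℕ → ℝ := fun i => (cExt M c i : ℝ) / M

lemma sum_cExt (c : Fin M → Fin (M + 1)) :
    ∑ i ∈ range M, cExt M c i = ∑ m : Fin M, (c m : ℕ) := by
  rw [← Fin.sum_univ_eq_sum_range (fun i => cExt M c i) M]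
  exact Finset.sum_congr rfl (fun m _ => by simp [cExt, m.isLt])

lemma qOf_mtype (hM : 0 < M) (c : Fin M → Fin (M + 1)) (hsum : ∑ m : Fin M, (c m : ℕ) = M) :
    IsMType M (qOf M c) := by
  have hMR : (0:ℝ) < M := by exact_mod_cast hM
  constructor
  · have h0 : ∀ i ∉ range M, qOf M c i = 0 := by
      intro i hi
      have hiM : ¬ i < M := by simpa using hi
      simp [qOf, cExt, hiM]
    have h1 : ∑ i ∈ range M, qOf M c i = 1 := by
      simp only [qOf]
      rw [← Finset.sum_div]
      rw [div_eq_one_iff_eq (ne_of_gt hMR)]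
      rw [← Nat.cast_sum, sum_cExt, hsum]
    rw [← h1]
    exact hasSum_sum_of_ne_finset_zero h0
  · refine ⟨cExt M c, fun i => ?_, fun i => rfl⟩
    unfold cExt
    split
    · exact Nat.lt_succ_iff.1 (c _).isLt
    · exact Nat.zero_le _

lemma F_qOf (ht : IsTargetDist t) (c : Fin M → Fin (M + 1)) :
    F t (qOf M c) = ∑ i ∈ range M, min (qOf M c i) (t i) := by
  apply tsum_eq_sum
  intro i hi
  have hiM : ¬ i < M := by simpa using hi
  have : qOf M c i = 0 := by simp [qOf, cExt, hiM]
  rw [this, min_eq_left (ht.1 i)]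

end Cand

lemma compress (ht : IsTargetDist t) (hM : 0 < M) (hq : IsMType M q) :
    ∃ c : Fin M → Fin (M + 1), (∑ m : Fin M, (c m : ℕ) = M) ∧ F t q ≤ F t (qOf M c) := by
  have hMR : (0:ℝ) < M := by exact_mod_cast hM
  have htanti : Antitone t := antitone_nat_of_succ_le ht.2.1
  obtain ⟨S, hSmem, hScard, hSsum⟩ := mtype_support hM hq
  obtain ⟨cc, hcc, hqc⟩ := hq.2
  set k := S.card with hk
  set e : Fin k ≃o {x // x ∈ S} := S.orderIsoOfFin rfl with he
  set d : ℕ → ℕ := fun j => if h : j < k then cc (e ⟨j, h⟩) else 0 with hd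
  have hdle : ∀ j, d j ≤ M := by
    intro j; rw [hd]; dsimp only; split
    · exact hcc _
    · exact Nat.zero_le _
  have hsm : StrictMono (fun m : Fin k => ((e m : ℕ))) := by
    intro a b hab
    exact_mod_cast e.strictMono hab
  have hle : ∀ m : Fin k, (m : ℕ) ≤ (e m : ℕ) := by
    intro m
    have := fin_le_strictMono hsm m.val m.isLt
    simpa using this
  have hdm : ∀ m : Fin k, d (m : ℕ) = cc ((e m : ℕ)) := by
    intro m; rw [hd]; dsimp only; rw [dif_pos m.isLt]
  refine ⟨fun m => ⟨d m, Nat.lt_succ_of_le (hdle m)⟩, ?_, ?_⟩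
  · -- sum equals M
    have hccS : ∑ x ∈ S, cc x = M := by
      have h1 : ∑ i ∈ S, q i = ∑ i ∈ S, (cc i : ℝ) / M := Finset.sum_congr rfl (fun i _ => hqc i)
      rw [hSsum] at h1
      rw [← Finset.sum_div] at h1
      have h2 : (∑ i ∈ S, (cc i : ℝ)) = M := by
        field_simp at h1
        linarith
      exact_mod_cast h2
    calc ∑ m : Fin M, d (m : ℕ) = ∑ i ∈ range M, d i := Fin.sum_univ_eq_sum_range d M
      _ = ∑ i ∈ range k, d i := by
          refine (Finset.sum_subset (range_subset_range.2 hScard) ?_).symm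
          intro x _ hx
          rw [hd]; exact dif_neg (by simpa using hx)
      _ = ∑ m : Fin k, d (m : ℕ) := (Fin.sum_univ_eq_sum_range d k).symm
      _ = ∑ m : Fin k, cc ((e m : ℕ)) := Finset.sum_congr rfl (fun m _ => hdm m)
      _ = ∑ x : {x // x ∈ S}, cc (x : ℕ) := Equiv.sum_comp e.toEquiv (fun x => cc (x : ℕ))
      _ = ∑ x ∈ S, cc x := Finset.sum_coe_sort S cc
      _ = M := hccS
  · -- F comparison
    have hq0 := mtype_nonneg hq
    have hFq : F t q = ∑ i ∈ S, min (q i) (t i) := by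
      apply tsum_eq_sum
      intro i hi
      have : q i = 0 := by
        by_contra hne
        exact hi ((hSmem i).2 hne)
      rw [this, min_eq_left (ht.1 i)]
    have hcext : ∀ i ∈ range M, qOf M (fun m => (⟨d m, Nat.lt_succ_of_le (hdle m)⟩ : Fin (M+1))) i
        = (d i : ℝ) / M := by
      intro i hi
      have hiM : i < M := by simpa using hi
      simp [qOf, cExt, hiM]
    rw [hFq, F_qOf M ht]
    calc ∑ i ∈ S, min (q i) (t i)
        = ∑ x : {x // x ∈ S}, min (q (x : ℕ)) (t (x : ℕ)) :=
          (Finset.sum_coe_sort S (fun i => min (q i) (t i))).symm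
      _ = ∑ m : Fin k, min (q ((e m : ℕ))) (t ((e m : ℕ))) :=
          (Equiv.sum_comp e.toEquiv (fun x : {x // x ∈ S} => min (q (x : ℕ)) (t (x : ℕ)))).symm
      _ ≤ ∑ m : Fin k, min ((d (m : ℕ) : ℝ) / M) (t (m : ℕ)) := by
          apply Finset.sum_le_sum
          intro m _
          rw [hdm m, ← hqc]
          exact min_le_min le_rfl (htanti (hle m))
      _ = ∑ i ∈ range k, min ((d i : ℝ) / M) (t i) :=
          Fin.sum_univ_eq_sum_range (fun i => min ((d i : ℝ) / M) (t i)) k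
      _ ≤ ∑ i ∈ range M, min ((d i : ℝ) / M) (t i) := by
          apply Finset.sum_le_sum_of_subset_of_nonneg (range_subset_range.2 hScard)
          intro i _ _
          exact le_min (by positivity) (ht.1 i)
      _ = ∑ i ∈ range M, min (qOf M (fun m => ⟨d m, Nat.lt_succ_of_le (hdle m)⟩) i) (t i) :=
          Finset.sum_congr rfl (fun i hi => by rw [hcext i hi])

lemma exists_opt (ht : IsTargetDist t) (hM : 0 < M) :
    ∃ p, IsMType M p ∧ ∀ q, IsMType M q → F t q ≤ F t p := by
  classical
  set A : Finset (Fin M → Fin (M + 1)) :=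
    Finset.univ.filter (fun c => ∑ m : Fin M, (c m : ℕ) = M) with hA
  have hne : A.Nonempty := by
    refine ⟨fun m => if m = (⟨0, hM⟩ : Fin M) then (⟨M, Nat.lt_succ_self M⟩ : Fin (M + 1)) else 0, ?_⟩
    rw [hA, Finset.mem_filter]
    refine ⟨Finset.mem_univ _, ?_⟩
    have : ∀ m : Fin M, ((if m = (⟨0, hM⟩ : Fin M) then (⟨M, Nat.lt_succ_self M⟩ : Fin (M + 1)) else 0 : Fin (M+1)) : ℕ)
        = if m = (⟨0, hM⟩ : Fin M) then M else 0 := by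
      intro m; split <;> rfl
    rw [Finset.sum_congr rfl (fun m _ => this m)]
    simp
  obtain ⟨b, hbA, hb⟩ := Finset.exists_max_image A (fun c => F t (qOf M c)) hne
  rw [hA, Finset.mem_filter] at hbA
  refine ⟨qOf M b, qOf_mtype M hM b hbA.2, ?_⟩
  intro q hq
  obtain ⟨c, hcsum, hcF⟩ := compress ht hM hq
  have hcA : c ∈ A := by rw [hA, Finset.mem_filter]; exact ⟨Finset.mem_univ _, hcsum⟩
  exact hcF.trans (hb c hcA)

lemma opt_lower (ht : IsTargetDist t) (hM : 0 < M) (n : ℕ) :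
    ∃ q, IsMType M q ∧ 1 - T t n - n / M ≤ F t q := by
  classical
  have hMR : (0:ℝ) < M := by exact_mod_cast hM
  rcases n with _ | m
  · obtain ⟨p, hp, _⟩ := exists_opt ht hM
    refine ⟨p, hp, ?_⟩
    have h1 : T t 0 = 1 := by rw [T_eq ht 0]; simp
    have h2 := F_nonneg ht (mtype_nonneg hp)
    rw [h1]
    simpa using h2
  set s : ℕ := ∑ i ∈ range m, ⌊(M:ℝ) * t (i+1)⌋₊ with hs
  have hfl : ∀ i, (⌊(M:ℝ) * t (i+1)⌋₊ : ℝ) ≤ M * t (i+1) :=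
    fun i => Nat.floor_le (by have := ht.1 (i+1); positivity)
  have hsle : (s:ℝ) ≤ M * ∑ i ∈ range m, t (i+1) := by
    rw [hs, Finset.mul_sum]
    push_cast
    exact Finset.sum_le_sum (fun i _ => hfl i)
  have hpart : (∑ i ∈ range m, t (i+1)) + t 0 = ∑ i ∈ range (m+1), t i :=
    (Finset.sum_range_succ' t m).symm
  have hpartle : ∑ i ∈ range (m+1), t i ≤ 1 := t_partial_le ht (m+1)
  have hkey : (s:ℝ) ≤ M * (1 - t 0) := by nlinarith
  have hsM : s ≤ M := by
    have h1 : (s:ℝ) ≤ M := by nlinarith [ht.1 0]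
    exact_mod_cast h1
  set c : ℕ → ℕ := fun i => if i = 0 then M - s else if i < m+1 then ⌊(M:ℝ) * t i⌋₊ else 0 with hc
  have hc0 : c 0 = M - s := by simp [hc]
  have hcsucc : ∀ i ∈ range m, c (i+1) = ⌊(M:ℝ) * t (i+1)⌋₊ := by
    intro i hi
    have him : i < m := by simpa using hi
    rw [hc]
    dsimp only
    rw [if_neg (Nat.succ_ne_zero i), if_pos (by omega)]
  have hczero : ∀ i, ¬ i < m + 1 → c i = 0 := by
    intro i hi
    rw [hc]
    dsimp only
    rw [if_neg (by omega), if_neg hi]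
  have hcsum : ∑ i ∈ range (m+1), c i = M := by
    rw [Finset.sum_range_succ' c m, Finset.sum_congr rfl hcsucc, hc0, ← hs]
    omega
  have hcle : ∀ i, c i ≤ M := by
    intro i
    rcases Nat.eq_zero_or_pos i with rfl | hi
    · rw [hc0]; omega
    rcases Nat.lt_or_ge i (m+1) with h1 | h1
    · obtain ⟨j, rfl⟩ : ∃ j, i = j + 1 := ⟨i - 1, by omega⟩
      rw [hcsucc j (by simp; omega)]
      calc ⌊(M:ℝ) * t (j+1)⌋₊ ≤ s := by
            rw [hs]
            exact Finset.single_le_sum (f := fun i => ⌊(M:ℝ) * t (i+1)⌋₊)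
              (fun i _ => Nat.zero_le _) (by simp; omega)
        _ ≤ M := hsM
    · rw [hczero i (by omega)]; exact Nat.zero_le _
  set q : ℕ → ℝ := fun i => (c i : ℝ) / M with hqdef
  have hmt : IsMType M q := by
    constructor
    · have h0 : ∀ i ∉ range (m+1), q i = 0 := by
        intro i hi
        rw [hqdef]
        dsimp only
        rw [hczero i (by simpa using hi)]
        simp
      have h1 : ∑ i ∈ range (m+1), q i = 1 := by
        rw [hqdef]
        dsimp only
        rw [← Finset.sum_div, ← Nat.cast_sum, hcsum, div_self (ne_of_gt hMR)]
      rw [← h1]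
      exact hasSum_sum_of_ne_finset_zero h0
    · exact ⟨c, hcle, fun i => rfl⟩
  refine ⟨q, hmt, ?_⟩
  have hFlb : ∑ i ∈ range (m+1), min (q i) (t i) ≤ F t q :=
    Summable.sum_le_tsum _ (fun i _ => le_min (mtype_nonneg hmt i) (ht.1 i))
      (summable_min ht (mtype_nonneg hmt))
  have hq0 : t 0 ≤ q 0 := by
    have h1 : q 0 = ((M - s : ℕ) : ℝ) / M := by rw [hqdef]; dsimp only; rw [hc0]
    rw [h1, Nat.cast_sub hsM, le_div_iff₀ hMR]
    nlinarith
  have hterm : ∀ i ∈ range m, t (i+1) - 1/M ≤ min (q (i+1)) (t (i+1)) := by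
    intro i hi
    have hcq : q (i+1) = (⌊(M:ℝ) * t (i+1)⌋₊ : ℝ) / M := by
      rw [hqdef]; dsimp only; rw [hcsucc i hi]
    rw [hcq, le_min_iff]
    constructor
    · have h2 : (M:ℝ) * t (i+1) - 1 ≤ (⌊(M:ℝ) * t (i+1)⌋₊ : ℝ) :=
        (Nat.sub_one_lt_floor _).le
      rw [le_div_iff₀ hMR]
      have h3 : (1/(M:ℝ)) * M = 1 := by field_simp
      nlinarith
    · have h9 : (0:ℝ) ≤ 1 / M := by positivity
      linarith
  have hsum2 : ∑ i ∈ range (m+1), min (q i) (t i)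
      = (∑ i ∈ range m, min (q (i+1)) (t (i+1))) + min (q 0) (t 0) :=
    Finset.sum_range_succ' _ m
  have hmin0 : min (q 0) (t 0) = t 0 := min_eq_right hq0
  have hlb2 : (∑ i ∈ range m, (t (i+1) - 1/M)) + t 0
      ≤ ∑ i ∈ range (m+1), min (q i) (t i) := by
    rw [hsum2, hmin0]
    exact add_le_add_left (Finset.sum_le_sum hterm) _
  have hexp : (∑ i ∈ range m, (t (i+1) - 1/M)) + t 0
      = (∑ i ∈ range (m+1), t i) - m / M := by
    rw [Finset.sum_sub_distrib, Finset.sum_const, Finset.card_range, nsmul_eq_mul, ← hpart]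
    push_cast
    ring
  have hTeq := T_eq ht (m+1)
  have hfin : 1 - T t (m+1) - (m+1 : ℕ) / M ≤ (∑ i ∈ range m, (t (i+1) - 1/M)) + t 0 := by
    rw [hexp, hTeq]
    have h9 : (0:ℝ) ≤ 1 / M := by positivity
    push_cast
    rw [add_div]
    linarith
  linarith

lemma sum_finset_le (ht : IsTargetDist t) (S : Finset ℕ) :
    ∑ i ∈ S, t i ≤ ∑ i ∈ range S.card, t i := by
  have htanti : Antitone t := antitone_nat_of_succ_le ht.2.1
  set k := S.card with hk
  set e : Fin k ≃o {x // x ∈ S} := S.orderIsoOfFin rfl with he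
  have hsm : StrictMono (fun m : Fin k => ((e m : ℕ))) := by
    intro a b hab
    exact_mod_cast e.strictMono hab
  have hle : ∀ m : Fin k, (m : ℕ) ≤ (e m : ℕ) := by
    intro m
    have := fin_le_strictMono hsm m.val m.isLt
    simpa using this
  calc ∑ i ∈ S, t i = ∑ x : {x // x ∈ S}, t (x : ℕ) := (Finset.sum_coe_sort S t).symm
    _ = ∑ m : Fin k, t ((e m : ℕ)) :=
        (Equiv.sum_comp e.toEquiv (fun x : {x // x ∈ S} => t (x : ℕ))).symm
    _ ≤ ∑ m : Fin k, t (m : ℕ) := Finset.sum_le_sum (fun m _ => htanti (hle m))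
    _ = ∑ i ∈ range k, t i := Fin.sum_univ_eq_sum_range t k

lemma opt_F_le_card (ht : IsTargetDist t) (hq : IsMType M q) {S : Finset ℕ}
    (hSmem : ∀ i, i ∈ S ↔ q i ≠ 0) : F t q ≤ 1 - T t S.card := by
  have hFq : F t q = ∑ i ∈ S, min (q i) (t i) := by
    apply tsum_eq_sum
    intro i hi
    have : q i = 0 := by
      by_contra hne
      exact hi ((hSmem i).2 hne)
    rw [this, min_eq_left (ht.1 i)]
  have h1 : ∑ i ∈ S, min (q i) (t i) ≤ ∑ i ∈ S, t i :=
    Finset.sum_le_sum (fun i _ => min_le_right _ _)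
  have h2 := sum_finset_le ht S
  have h3 := T_eq ht S.card
  rw [hFq]
  linarith

lemma card_small_le (ht : IsTargetDist t) (hM : 0 < M) (hq : IsMType M q) {S : Finset ℕ}
    (hSmem : ∀ i, i ∈ S ↔ q i ≠ 0) {N : ℕ} (hN : ∀ i, N ≤ i → t i ≤ 1 / (2 * M)) :
    (S.card : ℝ) ≤ N + 2 * M * (1 - F t q) := by
  classical
  have hMR : (0:ℝ) < M := by exact_mod_cast hM
  have hq0 := mtype_nonneg hq
  set g : ℕ → ℝ := fun i => q i - min (q i) (t i) with hg
  have hgsummable : Summable g := hq.1.summable.sub (summable_min ht hq0)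
  have hgnonneg : ∀ i, 0 ≤ g i := fun i => by
    rw [hg]; dsimp only; have := min_le_left (q i) (t i); linarith
  have hgsum : ∑' i, g i = 1 - F t q := by
    rw [hg]
    rw [Summable.tsum_sub hq.1.summable (summable_min ht hq0), hq.1.tsum_eq]
    rfl
  set S2 := S.filter (fun i => N ≤ i) with hS2
  have hcard : S.card ≤ N + S2.card := by
    have h1 : (S.filter (fun i => i < N)).card + (S.filter (fun i => ¬ i < N)).card = S.card :=
      Finset.card_filter_add_card_filter_not _
    have h3 : S.filter (fun i => ¬ i < N) = S2 := by
      rw [hS2]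
      apply Finset.filter_congr
      intro x _
      simp [not_lt]
    have h2 : (S.filter (fun i => i < N)) ⊆ range N := by
      intro x hx
      simp only [Finset.mem_filter] at hx
      simpa using hx.2
    have h4 := Finset.card_le_card h2
    rw [Finset.card_range] at h4
    rw [h3] at h1
    omega
  have hpt : ∀ i ∈ S2, (1:ℝ)/(2*M) ≤ g i := by
    intro i hi
    have hiS : i ∈ S := Finset.filter_subset _ _ hi
    have hiN : N ≤ i := by
      rw [hS2] at hi
      exact (Finset.mem_filter.1 hi).2
    have h5 : 1/(M:ℝ) ≤ q i := mtype_ge hM hq ((hSmem i).1 hiS)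
    have h6 : min (q i) (t i) ≤ 1/(2*(M:ℝ)) := le_trans (min_le_right _ _) (hN i hiN)
    have h7 : 1/(M:ℝ) - 1/(2*M) = 1/(2*M) := by field_simp; ring
    rw [hg]
    dsimp only
    linarith
  have hS2card : (S2.card : ℝ) * (1/(2*M)) ≤ 1 - F t q := by
    rw [← hgsum]
    calc (S2.card : ℝ) * (1/(2*M)) = ∑ _i ∈ S2, (1:ℝ)/(2*M) := by
          rw [Finset.sum_const, nsmul_eq_mul]
      _ ≤ ∑ i ∈ S2, g i := Finset.sum_le_sum hpt
      _ ≤ ∑' i, g i := Summable.sum_le_tsum _ (fun i _ => hgnonneg i) hgsummable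
  have hFle1 : 0 ≤ 1 - F t q := by
    rw [← hgsum]
    exact tsum_nonneg hgnonneg
  have hS2r : (S2.card : ℝ) ≤ 2 * M * (1 - F t q) := by
    have h8 : (0:ℝ) < 2 * M := by positivity
    rw [mul_one_div] at hS2card
    rw [div_le_iff₀ h8] at hS2card
    linarith [hS2card]
  have hc : (S.card : ℝ) ≤ (N : ℝ) + S2.card := by exact_mod_cast hcard
  linarith

end Stmt8Aux


open Stmt8Aux in
/-- for a target distribution with countably infinite support there is,
for every `M ≥ 1`, a variational-distance optimal `M`-type approximation `p M` whose
support sizes `k(M)` satisfy `k(M) → ∞` and `k(M)/M → 0` as `M → ∞`. -/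
theorem stmt8 (t : ℕ → ℝ) (ht : IsTargetDist t) (hpos : ∀ i, 0 < t i) :
    ∃ p : ℕ → ℕ → ℝ,
      (∀ M, 0 < M → IsMType M (p M) ∧ ∀ q, IsMType M q → vd (p M) t ≤ vd q t) ∧
      Filter.Tendsto (fun M => Nat.card {i | 0 < p M i}) Filter.atTop Filter.atTop ∧
      Filter.Tendsto (fun M => (Nat.card {i | 0 < p M i} : ℝ) / (M : ℝ))
        Filter.atTop (nhds 0) := by
  classical
  have htanti : Antitone t := antitone_nat_of_succ_le ht.2.1
  -- the optimal family
  set P : ℕ → ℕ → ℝ := fun M => if h : 0 < M then (exists_opt ht h).choose else fun _ => 0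
    with hP
  have hPspec : ∀ M, 0 < M → IsMType M (P M) ∧ ∀ q, IsMType M q → F t q ≤ F t (P M) := by
    intro M h
    rw [hP]
    dsimp only
    rw [dif_pos h]
    exact (exists_opt ht h).choose_spec
  -- support cardinality
  set k : ℕ → ℕ := fun M => Nat.card {i | 0 < P M i} with hk
  have hsupp : ∀ M, 0 < M → ∃ S : Finset ℕ,
      (∀ i, i ∈ S ↔ P M i ≠ 0) ∧ S.card ≤ M ∧ k M = S.card := by
    intro M hM
    obtain ⟨S, hSmem, hScard, _⟩ := mtype_support hM (hPspec M hM).1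
    refine ⟨S, hSmem, hScard, ?_⟩
    have hset : {i | 0 < P M i} = (↑S : Set ℕ) := by
      ext i
      simp only [Set.mem_setOf_eq, Finset.coe_sort_coe, Finset.mem_coe]
      rw [hSmem i]
      constructor
      · intro h; exact ne_of_gt h
      · intro h; exact lt_of_le_of_ne (mtype_nonneg (hPspec M hM).1 i) (Ne.symm h)
    rw [hk]
    dsimp only
    rw [hset]
    simp
  -- master bound A
  have hA : ∀ M, 0 < M → ∀ n : ℕ, T t (k M) ≤ T t n + n / M := by
    intro M hM n
    obtain ⟨S, hSmem, _, hkS⟩ := hsupp M hM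
    have h1 : F t (P M) ≤ 1 - T t S.card := opt_F_le_card ht (hPspec M hM).1 hSmem
    obtain ⟨q, hq, hqF⟩ := opt_lower ht hM n
    have h2 := (hPspec M hM).2 q hq
    rw [hkS]
    linarith
  -- N(M) machinery
  have hex : ∀ M : ℕ, 0 < M → ∃ i, t i ≤ 1 / (2 * M) := by
    intro M hM
    have hMR : (0:ℝ) < M := by exact_mod_cast hM
    have h1 := ht.2.2.summable.tendsto_atTop_zero
    exact (h1.eventually (ge_mem_nhds (by positivity : (0:ℝ) < 1 / (2 * M)))).exists
  set Nf : ℕ → ℕ := fun M => if h : 0 < M then Nat.find (hex M h) else 0 with hNf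
  have hNub : ∀ M (hM : 0 < M) i, Nf M ≤ i → t i ≤ 1 / (2 * M) := by
    intro M hM i hi
    rw [hNf] at hi
    simp only [dif_pos hM] at hi
    calc t i ≤ t (Nat.find (hex M hM)) := htanti hi
      _ ≤ 1 / (2 * M) := Nat.find_spec (hex M hM)
  have hNlb : ∀ M (hM : 0 < M) i, i < Nf M → 1 / (2 * (M:ℝ)) < t i := by
    intro M hM i hi
    rw [hNf] at hi
    simp only [dif_pos hM] at hi
    exact lt_of_not_ge (Nat.find_min (hex M hM) hi)
  have hhalf : Filter.Tendsto (fun M : ℕ => 1 / (2 * (M:ℝ))) Filter.atTop (nhds 0) := by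
    have h1 := (tendsto_const_div_atTop_nhds_zero_nat (1/2 : ℝ))
    refine h1.congr (fun M => ?_)
    rw [div_div]
  have hNtend : Filter.Tendsto Nf Filter.atTop Filter.atTop := by
    rw [Filter.tendsto_atTop]
    intro b
    rcases Nat.eq_zero_or_pos b with rfl | hb
    · exact Filter.Eventually.of_forall (fun M => Nat.zero_le _)
    have h1 : ∀ᶠ M : ℕ in Filter.atTop, 1 / (2 * (M:ℝ)) < t (b - 1) :=
      hhalf.eventually (gt_mem_nhds (hpos (b - 1)))
    filter_upwards [h1, Filter.eventually_gt_atTop 0] with M hM1 hM0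
    have h2 : b - 1 < Nf M := by
      rw [hNf]
      simp only [dif_pos hM0]
      rw [Nat.lt_find_iff]
      intro m hm
      have h3 : t (b-1) ≤ t m := htanti hm
      linarith
    omega
  -- N(M)/M → 0
  have hNdivbound : ∀ M, 0 < M → (Nf M : ℝ) / M ≤ 4 * T t (Nf M / 2) := by
    intro M hM
    have hMR : (0:ℝ) < M := by exact_mod_cast hM
    set N := Nf M with hN
    set h := N / 2 with hh
    have hIco : ∑ i ∈ Finset.Ico h N, t i ≤ T t h := by
      rw [Finset.sum_Ico_eq_sum_range t h N]
      have h2 : ∑ i ∈ Finset.range (N - h), t (h + i)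
          = ∑ i ∈ Finset.range (N - h), t (i + h) :=
        Finset.sum_congr rfl (fun i _ => by rw [Nat.add_comm])
      rw [h2]
      exact Summable.sum_le_tsum _ (fun i _ => (hpos _).le) (T_summable ht h)
    have hlow : ((N - h : ℕ) : ℝ) * (1 / (2 * M)) ≤ ∑ i ∈ Finset.Ico h N, t i := by
      calc ((N - h : ℕ) : ℝ) * (1 / (2 * M))
          = ∑ _i ∈ Finset.Ico h N, (1 / (2 * (M:ℝ))) := by
            rw [Finset.sum_const, Nat.card_Ico, nsmul_eq_mul]
        _ ≤ _ := Finset.sum_le_sum (fun i hi => by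
            have hiN : i < N := (Finset.mem_Ico.1 hi).2
            exact (hNlb M hM i hiN).le)
    have hNh : (N:ℝ) ≤ 2 * ((N - h : ℕ) : ℝ) := by
      have : N ≤ 2 * (N - h) := by omega
      exact_mod_cast this
    have h5 : ((N - h : ℕ) : ℝ) * (1 / (2 * M)) ≤ T t h := hlow.trans hIco
    have h4 : (0:ℝ) < 2 * M := by positivity
    rw [mul_one_div, div_le_iff₀ h4] at h5
    rw [div_le_iff₀ hMR]
    nlinarith
  have hNdiv : Filter.Tendsto (fun M => (Nf M : ℝ) / M) Filter.atTop (nhds 0) := by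
    rw [Metric.tendsto_nhds]
    intro ε hε
    have hTev : ∀ᶠ n in Filter.atTop, T t n < ε / 4 :=
      (T_tendsto ht).eventually (gt_mem_nhds (by positivity))
    obtain ⟨n₀, hn₀⟩ := hTev.exists
    have hev1 : ∀ᶠ M in Filter.atTop, 2 * n₀ ≤ Nf M := hNtend.eventually_ge_atTop (2 * n₀)
    filter_upwards [hev1, Filter.eventually_gt_atTop 0] with M hM1 hM0
    have hMR : (0:ℝ) < M := by exact_mod_cast hM0
    have hnn : (0:ℝ) ≤ (Nf M : ℝ) / M := by positivity
    rw [Real.dist_eq, sub_zero, abs_of_nonneg hnn]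
    have hhge : n₀ ≤ Nf M / 2 := by omega
    have h6 : T t (Nf M / 2) ≤ T t n₀ := T_anti ht hhge
    have h7 := hNdivbound M hM0
    linarith
  refine ⟨P, ?_, ?_, ?_⟩
  · intro M hM
    exact ⟨(hPspec M hM).1, fun q hq => vd_le_vd ht (hPspec M hM).1 hq ((hPspec M hM).2 q hq)⟩
  · -- k(M) → ∞
    rw [Filter.tendsto_atTop]
    intro b
    have hTb : 0 < T t b := T_pos ht hpos b
    obtain ⟨n, hn⟩ :=
      ((T_tendsto ht).eventually (gt_mem_nhds (by positivity : (0:ℝ) < T t b / 2))).exists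
    have hev2 : ∀ᶠ M : ℕ in Filter.atTop, (n:ℝ)/M < T t b / 2 :=
      (tendsto_const_div_atTop_nhds_zero_nat (n:ℝ)).eventually (gt_mem_nhds (by positivity))
    filter_upwards [hev2, Filter.eventually_gt_atTop 0] with M h1 h0
    have h2 := hA M h0 n
    have h3 : T t (k M) < T t b := by linarith
    have h4 : b < k M := lt_of_T_lt ht h3
    show b ≤ k M
    exact h4.le
  · -- k(M)/M → 0
    rw [Metric.tendsto_nhds]
    intro ε hε
    obtain ⟨n, hn⟩ :=
      ((T_tendsto ht).eventually (gt_mem_nhds (by positivity : (0:ℝ) < ε/8))).exists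
    have hev2 : ∀ᶠ M : ℕ in Filter.atTop, (2*(n:ℝ))/M < ε/4 :=
      (tendsto_const_div_atTop_nhds_zero_nat (2*(n:ℝ))).eventually
        (gt_mem_nhds (by positivity))
    have hev3 : ∀ᶠ M : ℕ in Filter.atTop, dist ((Nf M : ℝ)/M) 0 < ε/4 :=
      Metric.tendsto_nhds.1 hNdiv (ε/4) (by positivity)
    filter_upwards [hev2, hev3, Filter.eventually_gt_atTop 0] with M h1 h2 h0
    have hMR : (0:ℝ) < M := by exact_mod_cast h0
    obtain ⟨S, hSmem, hScard, hkS⟩ := hsupp M h0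
    have hcs : (S.card : ℝ) ≤ Nf M + 2 * M * (1 - F t (P M)) :=
      card_small_le ht h0 (hPspec M h0).1 hSmem (hNub M h0)
    obtain ⟨q, hq, hqF⟩ := opt_lower ht h0 n
    have h5 := (hPspec M h0).2 q hq
    have h6 : 1 - F t (P M) ≤ T t n + n / M := by linarith
    have hFle : 0 ≤ 1 - F t (P M) := by
      obtain ⟨S2, hS2mem, _, _⟩ := hsupp M h0
      have := opt_F_le_card ht (hPspec M h0).1 hS2mem
      have hT2 : 0 < T t S2.card := T_pos ht hpos _
      linarith
    have e1 : 2*(M:ℝ)*(T t n + n/M) = 2*M*(T t n) + 2*n := by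
      field_simp
    have h7 : (k M : ℝ) ≤ Nf M + 2*M*(T t n) + 2*n := by
      rw [hkS]
      nlinarith
    have h8 : (k M : ℝ)/M ≤ (Nf M : ℝ)/M + 2*(T t n) + (2*(n:ℝ))/M := by
      rw [div_le_iff₀ hMR]
      have e2 : ((Nf M : ℝ)/M + 2*(T t n) + (2*(n:ℝ))/M) * M
          = (Nf M : ℝ) + 2*M*(T t n) + 2*n := by
        field_simp
      rw [e2]
      exact h7
    have h9 : (0:ℝ) ≤ (k M : ℝ)/M := by positivity
    have h10 : (Nf M : ℝ)/M < ε/4 := by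
      rw [Real.dist_eq, sub_zero, abs_of_nonneg (by positivity : (0:ℝ) ≤ (Nf M : ℝ)/M)] at h2
      exact h2
    show dist ((k M : ℝ)/M) 0 < ε
    rw [Real.dist_eq, sub_zero, abs_of_nonneg h9]
    linarith
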